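/- Let n ≥ 4 and 2 ≤ j ≤ n−2. For words over {1,…,n}, write u ⊙ w for the lexicographically greatest shuffle of u and w, and ⟨a,b⟩ for the segment (a, a+1, …, b). Then for every dominant word μ over {1,…,n}, the strict inequality (μ ⊙ ⟨j+1,n⟩) ⊙ ⟨j,n−1⟩ > (μ ⊙ ⟨j+1,n−1⟩) ⊙ ⟨j,n⟩ holds in the lexicographic order. -/

import Mathlib

/-- `IsShuffle u v w` : the word `w` is a shuffle (interleaving) of the words `u` and `v`. -/
inductive IsShuffle : List ℕ → List ℕ → List ℕ → Prop
  | nil : IsShuffle [] [] []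
  | left (a : ℕ) {u v w : List ℕ} : IsShuffle u v w → IsShuffle (a :: u) v (a :: w)
  | right (a : ℕ) {u v w : List ℕ} : IsShuffle u v w → IsShuffle u (a :: v) (a :: w)

/-- The segment ⟨k,l⟩, i.e. the word (k, k+1, …, l). -/
def segWord (k l : ℕ) : List ℕ := List.range' k (l + 1 - k)

/-- `w` is a segment of the alphabet {1,…,n}. -/
def IsSegment (n : ℕ) (w : List ℕ) : Prop :=
  ∃ k l : ℕ, 1 ≤ k ∧ k ≤ l ∧ l ≤ n ∧ w = segWord k l

/-- A dominant word of type `A_n`: a concatenation of segments in weakly decreasing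
lexicographic order (this is then automatically the canonical factorization). -/
def IsDominant (n : ℕ) (w : List ℕ) : Prop :=
  ∃ fs : List (List ℕ), List.Chain' (· ≥ ·) fs ∧ (∀ u ∈ fs, IsSegment n u) ∧ fs.flatten = w

namespace CSI

abbrev W := List ℕ

def ge' : W → W → Prop := fun x y => y ≤ x

instance : DecidableRel ge' := fun x y => inferInstanceAs (Decidable (y ≤ x))
instance : IsTrans W ge' := ⟨fun _ _ _ h1 h2 => le_trans h2 h1⟩
instance : IsTotal W ge' := ⟨fun a b => le_total b a⟩
instance : IsAntisymm W ge' := ⟨fun _ _ h1 h2 => le_antisymm h2 h1⟩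

def oi (s : W) (hs : List W) : List W := List.orderedInsert ge' s hs

/-! ### order lemmas -/

theorem lt_of_head_lt {a b : ℕ} {u v : W} (h : a < b) : a :: u < b :: v := List.Lex.rel h

theorem cons_lt_cons_iff {a : ℕ} {u v : W} : a :: u < a :: v ↔ u < v := by simp [List.cons_lt_cons_iff]

theorem cons_le_cons_iff {a : ℕ} {u v : W} : a :: u ≤ a :: v ↔ u ≤ v := by
  rw [le_iff_lt_or_eq, le_iff_lt_or_eq, cons_lt_cons_iff]
  constructor
  · rintro (h | h); · exact Or.inl h
    · exact Or.inr (by injection h)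
  · rintro (h | h); · exact Or.inl h
    · exact Or.inr (by rw [h])

theorem head_le_of_le {a b : ℕ} {u v : W} (h : a :: u ≤ b :: v) : a ≤ b := by
  rcases le_iff_lt_or_eq.mp h with h | h
  · exact List.head_le_of_lt h
  · injection h with h1 _; omega

theorem le_append (u v : W) : u ≤ u ++ v := by
  induction u with
  | nil => cases v with
    | nil => exact le_refl _
    | cons b v => exact (List.nil_lt_cons _ _).le
  | cons a u ih => exact cons_le_cons_iff.mpr ih

theorem lt_append_cons (u : W) (b : ℕ) (v : W) : u < u ++ (b :: v) := by
  induction u with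
  | nil => exact List.nil_lt_cons _ _
  | cons a u ih => exact cons_lt_cons_iff.mpr ih

theorem append_lt_append_left {u v : W} (x : W) (h : u < v) : x ++ u < x ++ v :=
  List.Lex.append_left _ h _

theorem append_le_append_left {u v : W} (x : W) (h : u ≤ v) : x ++ u ≤ x ++ v := by
  rcases le_iff_lt_or_eq.mp h with h | h
  · exact le_of_lt (append_lt_append_left x h)
  · rw [h]

theorem nil_lt_of_ne_nil {v : W} (h : v ≠ []) : ([] : W) < v := by
  cases v with
  | nil => exact absurd rfl h
  | cons a v => exact List.nil_lt_cons _ _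

/-! ### segment lemmas -/

theorem segWord_eq_nil {k l : ℕ} (h : l < k) : segWord k l = [] := by
  unfold segWord
  have : l + 1 - k = 0 := by omega
  rw [this, List.range'_zero]

theorem segWord_cons {k l : ℕ} (h : k ≤ l) : segWord k l = k :: segWord (k + 1) l := by
  unfold segWord
  have h1 : l + 1 - k = (l - k) + 1 := by omega
  have h2 : l + 1 - (k + 1) = l - k := by omega
  rw [h1, h2, List.range'_succ]

theorem segWord_ne_nil {k l : ℕ} (h : k ≤ l) : segWord k l ≠ [] := by
  rw [segWord_cons h]; simp

theorem segWord_split {k m l : ℕ} (h1 : k ≤ m + 1) (h2 : m ≤ l) :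
    segWord k l = segWord k m ++ segWord (m + 1) l := by
  unfold segWord
  have := @List.range'_append_1 k (m + 1 - k) (l + 1 - (m + 1))
  have e1 : k + (m + 1 - k) = m + 1 := by omega
  have e2 : m + 1 - k + (l + 1 - (m + 1)) = l + 1 - k := by omega
  rw [e1, e2] at this
  exact this.symm

theorem segWord_le_segWord {k m l : ℕ} (h1 : k ≤ m + 1) (h2 : m ≤ l) :
    segWord k m ≤ segWord k l := by
  rw [segWord_split h1 h2]; exact le_append _ _

theorem segWord_lt_segWord {k m l : ℕ} (h1 : k ≤ m + 1) (h2 : m < l) :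
    segWord k m < segWord k l := by
  rw [segWord_split h1 (le_of_lt h2), segWord_cons (by omega : m + 1 ≤ l)]
  exact lt_append_cons _ _ _

theorem segWord_lt_of_head_lt {k l k' l' : ℕ} (h : k < k') (h2 : k' ≤ l') :
    segWord k l < segWord k' l' := by
  rw [segWord_cons h2]
  rcases le_or_gt k l with hkl | hkl
  · rw [segWord_cons hkl]; exact lt_of_head_lt h
  · rw [segWord_eq_nil hkl]; exact List.nil_lt_cons _ _

/-! ### orderedInsert lemmas -/

theorem oi_cons_of_ge {x h : W} (t : List W) (hx : h ≤ x) : oi x (h :: t) = x :: h :: t := by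
  unfold oi List.orderedInsert
  rw [if_pos (show ge' x h from hx)]

theorem oi_cons_of_lt {x h : W} (t : List W) (hx : ¬ (h ≤ x)) :
    oi x (h :: t) = h :: oi x t := by
  unfold oi List.orderedInsert
  rw [if_neg (show ¬ ge' x h from hx)]
  cases t <;> rfl

theorem oi_sorted {x : W} {hs : List W} (h : List.Pairwise ge' hs) :
    List.Pairwise ge' (oi x hs) := List.Pairwise.orderedInsert _ _ h

theorem oi_perm (x : W) (hs : List W) : List.Perm (oi x hs) (x :: hs) :=
  List.perm_orderedInsert _ _ _

theorem sorted_cons_of {x : W} {hs : List W} (h : List.Pairwise ge' hs)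
    (hx : ∀ e ∈ hs, e ≤ x) : List.Pairwise ge' (x :: hs) :=
  List.pairwise_cons.mpr ⟨hx, h⟩

theorem oi_cons_of_le {x h : W} {t : List W} (hs : List.Pairwise ge' (h :: t)) (hx : x ≤ h) :
    oi x (h :: t) = h :: oi x t := by
  by_cases hge : h ≤ x
  · have hxh : x = h := le_antisymm hx hge
    rw [oi_cons_of_ge t hge]
    cases t with
    | nil => simp [oi, List.orderedInsert, hxh]
    | cons b t' =>
      have hb : b ≤ x := hxh ▸ (List.rel_of_pairwise_cons hs (a' := b) (by simp))
      rw [oi_cons_of_ge t' hb, hxh]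
  · exact oi_cons_of_lt t hge

theorem oi_swap {x y : W} {hs : List W} (h : List.Pairwise ge' hs) :
    oi x (oi y hs) = oi y (oi x hs) := by
  refine List.Perm.eq_of_pairwise (le := ge') (fun _ _ _ _ h1 h2 => le_antisymm h2 h1) (oi_sorted (oi_sorted h)) (oi_sorted (oi_sorted h)) ?_
  exact ((oi_perm x _).trans (((oi_perm y hs).cons x).trans
    ((List.Perm.swap _ _ _).trans (((oi_perm x hs).cons y).symm)))).trans (oi_perm y _).symm

theorem flatten_oi_nil (hs : List W) : (oi [] hs).flatten = hs.flatten := by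
  induction hs with
  | nil => simp [oi, List.orderedInsert]
  | cons h t ih =>
    by_cases hge : h ≤ ([] : W)
    · rw [oi_cons_of_ge t hge]
      have : h = [] := le_antisymm hge (by
        cases h with
        | nil => exact le_refl _
        | cons b v => exact (List.nil_lt_cons _ _).le)
      simp [this]
    · rw [oi_cons_of_lt t hge]
      simp [ih]

theorem mem_oi {e x : W} {hs : List W} (h : e ∈ oi x hs) : e = x ∨ e ∈ hs := by
  have := (oi_perm x hs).mem_iff.mp h
  simpa using this

/-! ### shuffle lemmas -/

theorem shuffle_nil_nil_self : ∀ u : W, IsShuffle u [] u := by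
  intro u
  induction u with
  | nil => exact IsShuffle.nil
  | cons a u ih => exact IsShuffle.left a ih

theorem shuffle_prepend_right : ∀ (s u : W), IsShuffle u s (s ++ u) := by
  intro s
  induction s with
  | nil => intro u; exact shuffle_nil_nil_self u
  | cons a s ih => intro u; exact IsShuffle.right a (ih u)

theorem shuffle_prepend_left {u v w : W} (x : W) (h : IsShuffle u v w) :
    IsShuffle (x ++ u) v (x ++ w) := by
  induction x with
  | nil => exact h
  | cons a x ih => exact IsShuffle.left a ih

theorem shuffle_nil_right_eq {u v w : W} (h : IsShuffle u v w) (hv : v = []) : w = u := by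
  induction h with
  | nil => rfl
  | left a h ih => rw [ih hv]
  | right a h ih => exact absurd hv (by simp)

theorem shuffle_flatten_oi : ∀ (hs : List W) (s : W),
    IsShuffle hs.flatten s (oi s hs).flatten := by
  intro hs s
  induction hs with
  | nil =>
    have : oi s [] = [s] := rfl
    rw [this]
    simpa using shuffle_prepend_right s []
  | cons h t ih =>
    by_cases hge : h ≤ s
    · rw [oi_cons_of_ge t hge]
      simpa using shuffle_prepend_right s (h :: t).flatten
    · rw [oi_cons_of_lt t hge]
      simpa using shuffle_prepend_left h ih

/-! ### more helpers -/

def IsSeg (e : W) : Prop := ∃ k l : ℕ, k ≤ l ∧ e = segWord k l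

theorem append_head_lt {a b : ℕ} (u v y z : W) (h : a < b) :
    (a :: u) ++ v < (b :: y) ++ z := by
  simp only [List.cons_append]; exact lt_of_head_lt h

theorem flatten_lt_cons {X : List W} {b : ℕ} (z : W)
    (hX : ∀ e ∈ X, ∀ c u, e = c :: u → c < b) : X.flatten < b :: z := by
  induction X with
  | nil => exact List.nil_lt_cons _ _
  | cons e X ih =>
    cases e with
    | nil =>
      simp only [List.flatten_cons, List.nil_append]
      exact ih (fun e he => hX e (by simp [he]))
    | cons c u =>
      simp only [List.flatten_cons, List.cons_append]
      exact lt_of_head_lt (hX _ (by simp) c u rfl)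

theorem sorted_cons_oi {h x : W} {t : List W} (hsort : List.Pairwise ge' (h :: t)) (hx : x ≤ h) :
    List.Pairwise ge' (h :: oi x t) :=
  sorted_cons_of (oi_sorted hsort.of_cons)
    (fun e he => (mem_oi he).elim (fun h' => h' ▸ hx)
      (fun h' => List.rel_of_pairwise_cons hsort h'))

theorem le_h_of_mem_oi2 {h x y : W} {t : List W} (hsort : List.Pairwise ge' (h :: t))
    (hx : x ≤ h) (hy : y ≤ h) : ∀ e ∈ oi x (oi y t), e ≤ h := by
  intro e he
  rcases mem_oi he with rfl | he
  · exact hx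
  rcases mem_oi he with rfl | he
  · exact hy
  · exact List.rel_of_pairwise_cons hsort he

theorem lemB : ∀ (hs : List W), List.Pairwise ge' hs → (∀ e ∈ hs, IsSeg e) →
    ∀ k M L : ℕ, k ≤ M → M < L →
    (oi (segWord (k+1) M) (oi (segWord k L) hs)).flatten <
    (oi (segWord (k+1) L) (oi (segWord k M) hs)).flatten := by
  intro hs
  induction hs with
  | nil =>
    intro _ _ k M L hkM hML
    have hS4c : segWord k L = k :: segWord (k+1) L := segWord_cons (by omega)
    have hS1c : segWord (k+1) L = (k+1) :: segWord (k+2) L := segWord_cons (by omega)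
    have hMc : segWord (M+1) L = (M+1) :: segWord (M+2) L := segWord_cons (by omega)
    have hS1split : segWord (k+1) L = segWord (k+1) M ++ segWord (M+1) L :=
      segWord_split (by omega) (by omega)
    have hS2ltS1 : segWord k M < segWord (k+1) L := segWord_lt_of_head_lt (by omega) (by omega)
    have e0 : oi (segWord k L) ([] : List W) = [segWord k L] := rfl
    have e0' : oi (segWord k M) ([] : List W) = [segWord k M] := rfl
    rw [e0, e0', oi_cons_of_ge _ hS2ltS1.le]
    by_cases hc : segWord k L ≤ segWord (k+1) M
    · rw [oi_cons_of_ge _ hc]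
      simp only [List.flatten_cons, List.flatten_nil, List.append_nil]
      rw [hS1split, List.append_assoc]
      apply append_lt_append_left
      rw [hS4c, hMc]
      simp only [List.cons_append]
      exact lt_of_head_lt (by omega)
    · -- then M = k and S3 = []
      have hMk : M = k := by
        by_contra hne
        exact hc (show segWord k L < segWord (k+1) M from
          segWord_lt_of_head_lt (by omega) (by omega)).le
      subst hMk
      rw [oi_cons_of_lt _ hc]
      have h3nil : segWord (M+1) M = [] := segWord_eq_nil (by omega)
      simp only [h3nil, List.flatten_cons, List.flatten_nil, List.append_nil, List.nil_append]
      rw [hS4c, hS1c]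
      simp only [List.cons_append]
      exact lt_of_head_lt (by omega)
  | cons h t ih =>
    intro hsort hseg k M L hkM hML
    obtain ⟨p, q, hpq, hh⟩ := hseg h (by simp)
    subst hh
    have hsortt : List.Pairwise ge' t := hsort.of_cons
    have hsegt : ∀ e ∈ t, IsSeg e := fun e he => hseg e (by simp [he])
    have hS4c : segWord k L = k :: segWord (k+1) L := segWord_cons (by omega)
    have hS1c : segWord (k+1) L = (k+1) :: segWord (k+2) L := segWord_cons (by omega)
    have hMc : segWord (M+1) L = (M+1) :: segWord (M+2) L := segWord_cons (by omega)
    have hph : segWord p q = p :: segWord (p+1) q := segWord_cons hpq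
    have hS1split : segWord (k+1) L = segWord (k+1) M ++ segWord (M+1) L :=
      segWord_split (by omega) (by omega)
    have hS2ltS1 : segWord k M < segWord (k+1) L := segWord_lt_of_head_lt (by omega) (by omega)
    have hS4ltS1 : segWord k L < segWord (k+1) L := segWord_lt_of_head_lt (by omega) (by omega)
    have hS3leS1 : segWord (k+1) M ≤ segWord (k+1) L := segWord_le_segWord (by omega) (by omega)
    have hS2leS4 : segWord k M ≤ segWord k L := segWord_le_segWord (by omega) (by omega)
    by_cases h1 : segWord (k+1) L ≤ segWord p q
    · -- case (i) : S1 ≤ h, everything goes below h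
      have hS4h : segWord k L ≤ segWord p q := le_trans hS4ltS1.le h1
      have hS2h : segWord k M ≤ segWord p q := le_trans hS2ltS1.le h1
      have hS3h : segWord (k+1) M ≤ segWord p q := le_trans hS3leS1 h1
      rw [oi_cons_of_le hsort hS4h, oi_cons_of_le hsort hS2h,
        oi_cons_of_le (sorted_cons_oi hsort hS4h) hS3h,
        oi_cons_of_le (sorted_cons_oi hsort hS2h) h1]
      simp only [List.flatten_cons]
      exact append_lt_append_left _ (ih hsortt hsegt k M L hkM hML)
    · have h2 : segWord p q < segWord (k+1) L := not_le.mp h1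
      have hpk1 : p ≤ k + 1 := by
        rw [hph, hS1c] at h2
        exact List.head_le_of_lt h2
      by_cases h3 : segWord k L ≤ segWord p q
      · -- case (ii) : S4 ≤ h < S1
        have hkp : k ≤ p := by
          rw [hS4c, hph] at h3
          exact head_le_of_le h3
        have hS2leh : segWord k M ≤ segWord p q := le_trans hS2leS4 h3
        -- RHS = S1 ++ h ++ flatten (oi S2 t)
        have r1 : oi (segWord k M) ((segWord p q) :: t) = (segWord p q) :: oi (segWord k M) t :=
          oi_cons_of_le hsort hS2leh
        have r2 : oi (segWord (k+1) L) ((segWord p q) :: oi (segWord k M) t)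
            = (segWord (k+1) L) :: (segWord p q) :: oi (segWord k M) t :=
          oi_cons_of_ge _ h2.le
        rw [r1, r2]
        have l1 : oi (segWord k L) ((segWord p q) :: t) = (segWord p q) :: oi (segWord k L) t :=
          oi_cons_of_le hsort h3
        rw [l1]
        rcases (by omega : p = k ∨ p = k + 1) with hp | hp
        · -- (ii-1) h starts with k
          subst hp
          by_cases hMp : M = p
          · -- S3 = []
            have h3nil : segWord (p+1) M = [] := segWord_eq_nil (by omega)
            rw [h3nil, flatten_oi_nil]
            simp only [List.flatten_cons]
            rw [hph, hS1c]
            simp only [List.cons_append]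
            exact lt_of_head_lt (by omega)
          · have hhS3 : segWord p q ≤ segWord (p+1) M :=
              (segWord_lt_of_head_lt (by omega) (by omega)).le
            rw [oi_cons_of_ge _ hhS3]
            simp only [List.flatten_cons]
            rw [hS1split, List.append_assoc]
            apply append_lt_append_left
            rw [hph, hMc]
            simp only [List.cons_append]
            exact lt_of_head_lt (by omega)
        · -- (ii-2) h starts with k+1
          subst hp
          have hqL : q < L := by
            by_contra hq
            exact h1 (segWord_le_segWord (by omega) (by omega))
          by_cases hMq : M ≤ q
          · -- (ii-2a) S3 ≤ h
            have hS3leh : segWord (k+1) M ≤ segWord (k+1) q := segWord_le_segWord (by omega) hMq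
            rw [oi_cons_of_le (sorted_cons_oi hsort h3) hS3leh]
            simp only [List.flatten_cons]
            have hsplit : segWord (k+1) L = segWord (k+1) q ++ segWord (q+1) L :=
              segWord_split (by omega) (by omega)
            rw [hsplit, List.append_assoc]
            apply append_lt_append_left
            rw [segWord_cons (show q + 1 ≤ L by omega)]
            simp only [List.cons_append]
            apply flatten_lt_cons
            intro e he c u hecu
            have heh : e ≤ segWord (k+1) q :=
              le_h_of_mem_oi2 hsort hS3leh h3 e he
            rw [hecu, hph] at heh
            have := head_le_of_le heh
            omega
          · -- (ii-2b) h < S3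
            have hhltS3 : segWord (k+1) q < segWord (k+1) M :=
              segWord_lt_segWord (by omega) (by omega)
            rw [oi_cons_of_ge _ hhltS3.le]
            simp only [List.flatten_cons]
            rw [hS1split, List.append_assoc]
            apply append_lt_append_left
            rw [hph, hMc]
            simp only [List.cons_append]
            exact lt_of_head_lt (by omega)
      · -- case (iii) : h < S4
        have h4 : segWord p q < segWord k L := not_le.mp h3
        have hhleS1 : segWord p q ≤ segWord (k+1) L := h2.le
        -- RHS via swap
        have hswap : oi (segWord (k+1) L) (oi (segWord k M) ((segWord p q) :: t))
            = oi (segWord k M) (oi (segWord (k+1) L) ((segWord p q) :: t)) := oi_swap hsort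
        have r1 : oi (segWord (k+1) L) ((segWord p q) :: t)
            = (segWord (k+1) L) :: (segWord p q) :: t := oi_cons_of_ge _ hhleS1
        have hsort1 : List.Pairwise ge' ((segWord (k+1) L) :: (segWord p q) :: t) :=
          sorted_cons_of hsort (by
            intro e he
            rcases List.mem_cons.mp he with rfl | he'
            · exact hhleS1
            · exact le_trans (List.rel_of_pairwise_cons hsort he') hhleS1)
        have r2 : oi (segWord k M) ((segWord (k+1) L) :: (segWord p q) :: t)
            = (segWord (k+1) L) :: oi (segWord k M) ((segWord p q) :: t) :=
          oi_cons_of_le hsort1 hS2ltS1.le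
        rw [hswap, r1, r2]
        have l1 : oi (segWord k L) ((segWord p q) :: t)
            = (segWord k L) :: (segWord p q) :: t := oi_cons_of_ge _ h4.le
        rw [l1]
        by_cases hMk : M = k
        · have h3nil : segWord (k+1) M = [] := segWord_eq_nil (by omega)
          rw [h3nil, flatten_oi_nil]
          simp only [List.flatten_cons]
          rw [hS4c, hS1c]
          simp only [List.cons_append]
          exact lt_of_head_lt (by omega)
        · have hS4ltS3 : segWord k L < segWord (k+1) M :=
            segWord_lt_of_head_lt (by omega) (by omega)
          rw [oi_cons_of_ge _ hS4ltS3.le]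
          simp only [List.flatten_cons]
          rw [hS1split, List.append_assoc]
          apply append_lt_append_left
          rw [hS4c, hMc]
          simp only [List.cons_append]
          exact lt_of_head_lt (by omega)

theorem shuffle_nil_left_eq {u v w : W} (h : IsShuffle u v w) (hu : u = []) : w = v := by
  induction h with
  | nil => rfl
  | left a h ih => exact absurd hu (by simp)
  | right a h ih => rw [ih hu]

theorem oi_eq_cons {x : W} {hs : List W} (hall : ∀ e ∈ hs, e ≤ x) : oi x hs = x :: hs := by
  cases hs with
  | nil => rfl
  | cons h t => exact oi_cons_of_ge t (hall h (by simp))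

theorem shuffle_cons_inv {u s w : W} {c : ℕ} (h : IsShuffle u s (c :: w)) :
    (∃ u', u = c :: u' ∧ IsShuffle u' s w) ∨ (∃ s', s = c :: s' ∧ IsShuffle u s' w) := by
  cases h with
  | left a h => exact Or.inl ⟨_, rfl, h⟩
  | right a h => exact Or.inr ⟨_, rfl, h⟩

theorem lemA : ∀ (w : W) (hs : List W) (s : W), List.Pairwise ge' hs → (∀ e ∈ hs, IsSeg e) →
    (s = [] ∨ IsSeg s) → IsShuffle hs.flatten s w → w ≤ (oi s hs).flatten := by
  intro w
  induction w with
  | nil => intro hs s _ _ _ _; rcases (oi s hs).flatten with _ | ⟨b, v⟩; exacts [le_refl _, (List.nil_lt_cons _ _).le]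
  | cons c w' ih =>
    intro hs s hsort hseg hss hsh
    cases hs with
    | nil =>
      have hw : c :: w' = s := shuffle_nil_left_eq hsh rfl
      have h0 : oi s [] = [s] := rfl
      rw [h0, hw]
      simp
    | cons f hs₂ =>
      obtain ⟨k, l, hkl, hf⟩ := hseg f (by simp)
      have hsortt : List.Pairwise ge' hs₂ := hsort.of_cons
      have hsegt : ∀ e ∈ hs₂, IsSeg e := fun e he => hseg e (by simp [he])
      have hfc : f = k :: segWord (k+1) l := hf ▸ segWord_cons hkl
      have hflat : (f :: hs₂).flatten = k :: (segWord (k+1) l ++ hs₂.flatten) := by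
        rw [List.flatten_cons, hfc, List.cons_append]
      have hallf : ∀ e ∈ hs₂, e ≤ f := fun e he => List.rel_of_pairwise_cons hsort he
      rcases shuffle_cons_inv hsh with ⟨u', huu, hsub⟩ | ⟨s', hss', hsub⟩
      · -- the letter c comes from the first segment f, c = k
        rw [hflat] at huu
        have hck : k = c := by injection huu
        have huu' : segWord (k+1) l ++ hs₂.flatten = u' := by
          injection huu with _ h
        rw [← hck]
        rw [← huu'] at hsub
        by_cases hsf : s ≤ f
        · -- s inserted below f
          rw [oi_cons_of_le hsort hsf, List.flatten_cons, hfc, List.cons_append]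
          apply cons_le_cons_iff.mpr
          rcases Nat.lt_or_ge k l with hkl' | hkl'
          · -- k < l : residual segment
            have hfown : f < segWord (k+1) l := by
              rw [hf]; exact segWord_lt_of_head_lt (by omega) (by omega)
            have hsort2 : List.Pairwise ge' (segWord (k+1) l :: hs₂) :=
              sorted_cons_of hsortt (fun e he => le_trans (hallf e he) hfown.le)
            have hseg2 : ∀ e ∈ segWord (k+1) l :: hs₂, IsSeg e := by
              intro e he
              rcases List.mem_cons.mp he with rfl | he'
              · exact ⟨k+1, l, by omega, rfl⟩
              · exact hsegt e he'
            have hsub' : IsShuffle (segWord (k+1) l :: hs₂).flatten s w' := by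
              rw [List.flatten_cons]; exact hsub
            have hIH := ih _ s hsort2 hseg2 hss hsub'
            have hrw : (oi s (segWord (k+1) l :: hs₂)).flatten
                = segWord (k+1) l ++ (oi s hs₂).flatten := by
              rw [oi_cons_of_le hsort2 (le_trans hsf hfown.le), List.flatten_cons]
            rw [hrw] at hIH
            exact hIH
          · -- k = l : residual empty
            have hnil : segWord (k+1) l = [] := segWord_eq_nil (by omega)
            rw [hnil] at hsub ⊢
            simp only [List.nil_append] at hsub ⊢
            exact ih _ s hsortt hsegt hss hsub
        · -- s goes above f : s = segWord k2 m with f < s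
          have hfs : f < s := not_le.mp hsf
          have hsne : s ≠ [] := by
            intro h; rw [h] at hfs
            exact absurd hfs (by rw [hfc]; exact fun hx => List.not_lt_nil _ hx)
          obtain ⟨k2, m, hk2m, hseq⟩ := hss.resolve_left hsne
          have hsc : s = k2 :: segWord (k2+1) m := hseq ▸ segWord_cons hk2m
          rw [oi_cons_of_ge _ hfs.le, List.flatten_cons, List.flatten_cons, hsc,
            List.cons_append]
          have hkk2 : k ≤ k2 := by
            rw [hfc, hsc] at hfs
            exact List.head_le_of_lt hfs
          rcases Nat.lt_or_ge k k2 with hlt | hge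
          · exact le_of_lt (lt_of_head_lt hlt)
          · have heq : k2 = k := by omega
            rw [heq] at hseq hsc hk2m ⊢
            have hlm : l < m := by
              by_contra hml
              exact hsf (by rw [hf, hseq]; exact segWord_le_segWord (by omega) (by omega))
            apply cons_le_cons_iff.mpr
            have key : w' ≤ (oi (segWord (k+1) m) (oi (segWord k l) hs₂)).flatten := by
              have hlb := lemB hs₂ hsortt hsegt k l m (by omega) hlm
              rcases Nat.lt_or_ge k l with hkl' | hkl'
              · have hfown : f < segWord (k+1) l := by
                  rw [hf]; exact segWord_lt_of_head_lt (by omega) (by omega)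
                have hsort2 : List.Pairwise ge' (segWord (k+1) l :: hs₂) :=
                  sorted_cons_of hsortt (fun e he => le_trans (hallf e he) hfown.le)
                have hseg2 : ∀ e ∈ segWord (k+1) l :: hs₂, IsSeg e := by
                  intro e he
                  rcases List.mem_cons.mp he with rfl | he'
                  · exact ⟨k+1, l, by omega, rfl⟩
                  · exact hsegt e he'
                have hsub' : IsShuffle (segWord (k+1) l :: hs₂).flatten s w' := by
                  rw [List.flatten_cons]; exact hsub
                have hIH := ih _ s hsort2 hseg2 hss hsub'
                have hrw : oi s (segWord (k+1) l :: hs₂)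
                    = oi (segWord (k+1) l) (oi (segWord k m) hs₂) := by
                  rw [hseq, ← oi_eq_cons (fun e he => le_trans (hallf e he) hfown.le)]
                  exact oi_swap hsortt
                rw [hrw] at hIH
                exact (lt_of_le_of_lt hIH hlb).le
              · have hnil : segWord (k+1) l = [] := segWord_eq_nil (by omega)
                rw [hnil] at hsub
                simp only [List.nil_append] at hsub
                have hIH := ih _ s hsortt hsegt hss hsub
                rw [hseq] at hIH
                rw [hnil, flatten_oi_nil] at hlb
                exact (lt_of_le_of_lt hIH hlb).le
            have hrhs : (oi (segWord (k+1) m) (oi (segWord k l) hs₂)).flatten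
                = segWord (k+1) m ++ (segWord k l ++ hs₂.flatten) := by
              rw [oi_eq_cons (fun e he => le_trans (hallf e he) hf.le)]
              rw [show oi (segWord (k+1) m) (segWord k l :: hs₂)
                  = segWord (k+1) m :: segWord k l :: hs₂ from
                oi_cons_of_ge _ (show segWord k l ≤ segWord (k+1) m from
                  (segWord_lt_of_head_lt (by omega) (by omega)).le)]
              rw [List.flatten_cons, List.flatten_cons]
            rw [hrhs] at key
            rw [hf]
            exact key
      · -- the letter c comes from s
        have hsne : s ≠ [] := by rw [hss']; simp
        obtain ⟨k2, m, hk2m, hseq⟩ := hss.resolve_left hsne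
        have hsc : s = k2 :: segWord (k2+1) m := hseq ▸ segWord_cons hk2m
        have hsc' : c :: s' = k2 :: segWord (k2+1) m := by rw [← hss', hsc]
        have hck : c = k2 := by injection hsc'
        have hs'eq : s' = segWord (k2+1) m := by injection hsc' with _ h
        rw [hck]
        have hs'seg : s' = [] ∨ IsSeg s' := by
          rcases Nat.lt_or_ge k2 m with h' | h'
          · exact Or.inr ⟨k2+1, m, by omega, hs'eq⟩
          · exact Or.inl (by rw [hs'eq]; exact segWord_eq_nil (by omega))
        by_cases hsf : s ≤ f
        · rw [oi_cons_of_le hsort hsf, List.flatten_cons, hfc, List.cons_append]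
          have hk2k : k2 ≤ k := by
            rw [hfc, hsc] at hsf
            exact head_le_of_le hsf
          rcases Nat.lt_or_ge k2 k with hlt | hge
          · exact le_of_lt (lt_of_head_lt hlt)
          · have heq : k2 = k := by omega
            rw [heq] at hseq hsc hk2m hs'eq ⊢
            have hml : m ≤ l := by
              by_contra hml
              have : f < s := by
                rw [hf, hseq]; exact segWord_lt_segWord (by omega) (by omega)
              exact absurd hsf (not_le.mpr this)
            apply cons_le_cons_iff.mpr
            have hIH := ih (f :: hs₂) s' hsort hseg hs'seg hsub
            rw [hs'eq] at hIH
            have hfof : oi (segWord k l) hs₂ = f :: hs₂ := by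
              rw [oi_eq_cons (fun e he => le_trans (hallf e he) hf.le), ← hf]
            rw [← hfof] at hIH
            rcases Nat.lt_or_ge m l with hml' | hml'
            · -- m < l : strict, via lemB; note k < l
              have hlb := lemB hs₂ hsortt hsegt k m l hk2m hml'
              have hfle : f ≤ segWord (k+1) l := by
                rw [hf]; exact (segWord_lt_of_head_lt (by omega) (by omega)).le
              have hall2 : ∀ e ∈ hs₂, e ≤ segWord (k+1) l :=
                fun e he => le_trans (hallf e he) hfle
              have hgoal : (oi (segWord (k+1) l) (oi (segWord k m) hs₂)).flatten
                  = segWord (k+1) l ++ (oi s hs₂).flatten := by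
                rw [oi_swap hsortt, oi_eq_cons hall2,
                  oi_cons_of_le (sorted_cons_of hsortt hall2)
                    (show segWord k m ≤ segWord (k+1) l from
                      (segWord_lt_of_head_lt (by omega) (by omega)).le),
                  List.flatten_cons, hseq]
              rw [← hgoal]
              exact (lt_of_le_of_lt hIH hlb).le
            · -- m = l
              have hml2 : m = l := by omega
              rw [hml2] at hIH
              rcases Nat.lt_or_ge k l with hkl' | hkl'
              · have hfle : f ≤ segWord (k+1) l := by
                  rw [hf]; exact (segWord_lt_of_head_lt (by omega) (by omega)).le
                have hall2 : ∀ e ∈ hs₂, e ≤ segWord (k+1) l :=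
                  fun e he => le_trans (hallf e he) hfle
                have hgoal : (oi (segWord (k+1) l) (oi (segWord k l) hs₂)).flatten
                    = segWord (k+1) l ++ (oi s hs₂).flatten := by
                  rw [oi_swap hsortt, oi_eq_cons hall2,
                    oi_cons_of_le (sorted_cons_of hsortt hall2)
                      (show segWord k l ≤ segWord (k+1) l from
                        (segWord_lt_of_head_lt (by omega) (by omega)).le),
                    List.flatten_cons, hseq, hml2]
                rw [← hgoal]
                exact hIH
              · -- k = l = m : s = f, residual empty
                have hkeq : k = l := by omega
                have hnil : segWord (k+1) l = [] := segWord_eq_nil (by omega)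
                rw [hnil, List.nil_append]
                rw [hnil, flatten_oi_nil, hfof] at hIH
                have : oi s hs₂ = f :: hs₂ := by
                  rw [hseq, hml2, ← hfof]
                rw [this]
                exact hIH
        · -- s above f
          have hfs : f < s := not_le.mp hsf
          rw [oi_cons_of_ge _ hfs.le, List.flatten_cons, List.flatten_cons, hsc,
            List.cons_append]
          apply cons_le_cons_iff.mpr
          rcases Nat.lt_or_ge k2 m with hk2m' | hk2m'
          · -- s' nonempty
            have hk2k : k ≤ k2 := by
              rw [hfc, hsc] at hfs
              exact List.head_le_of_lt hfs
            have hfs' : f ≤ segWord (k2+1) m := by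
              rw [hf]; exact (segWord_lt_of_head_lt (by omega) (by omega)).le
            have hIH := ih (f :: hs₂) s' hsort hseg hs'seg hsub
            rw [hs'eq] at hIH
            have hrw : (oi (segWord (k2+1) m) (f :: hs₂)).flatten
                = segWord (k2+1) m ++ (f ++ hs₂.flatten) := by
              rw [oi_cons_of_ge _ hfs', List.flatten_cons, List.flatten_cons]
            rw [hrw] at hIH
            exact hIH
          · -- s' empty : w' is exactly the rest
            have hnil : segWord (k2+1) m = [] := segWord_eq_nil (by omega)
            rw [hs'eq, hnil] at hsub
            have hw' : w' = (f :: hs₂).flatten := shuffle_nil_right_eq hsub rfl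
            rw [hnil, List.nil_append, hw', List.flatten_cons]

theorem greatest_oi (hs : List W) (s : W) (hsort : List.Pairwise ge' hs)
    (hseg : ∀ e ∈ hs, IsSeg e) (hss : s = [] ∨ IsSeg s) :
    IsGreatest {w | IsShuffle hs.flatten s w} (oi s hs).flatten :=
  ⟨shuffle_flatten_oi hs s, fun w hw => lemA w hs s hsort hseg hss hw⟩


theorem main (n j : ℕ) (hn : 4 ≤ n)
    (hj1 : 2 ≤ j) (hj2 : j ≤ n - 2)
    (μ : List ℕ) (hμ : IsDominant n μ)
    (a b c d : List ℕ)
    (ha : IsGreatest {w | IsShuffle μ (segWord (j + 1) n) w} a)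
    (hb : IsGreatest {w | IsShuffle a (segWord j (n - 1)) w} b)
    (hc : IsGreatest {w | IsShuffle μ (segWord (j + 1) (n - 1)) w} c)
    (hd : IsGreatest {w | IsShuffle c (segWord j n) w} d) :
    d < b := by
  obtain ⟨fs, hchain, hsegn, hflat⟩ := hμ
  have hjn : j + 2 ≤ n := by omega
  have hsort : List.Pairwise ge' fs := List.isChain_iff_pairwise.mp hchain
  have hseg' : ∀ e ∈ fs, IsSeg e := by
    intro e he
    obtain ⟨k, l, _, h2, _, h4⟩ := hsegn e he
    exact ⟨k, l, h2, h4⟩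
  -- a
  have hS1 : (segWord (j+1) n = []) ∨ IsSeg (segWord (j+1) n) :=
    Or.inr ⟨j+1, n, by omega, rfl⟩
  have hS2 : (segWord j (n-1) = []) ∨ IsSeg (segWord j (n-1)) :=
    Or.inr ⟨j, n-1, by omega, rfl⟩
  have hS3 : (segWord (j+1) (n-1) = []) ∨ IsSeg (segWord (j+1) (n-1)) :=
    Or.inr ⟨j+1, n-1, by omega, rfl⟩
  have hS4 : (segWord j n = []) ∨ IsSeg (segWord j n) :=
    Or.inr ⟨j, n, by omega, rfl⟩
  have ga := greatest_oi fs (segWord (j+1) n) hsort hseg' hS1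
  rw [hflat] at ga
  have hae : a = (oi (segWord (j+1) n) fs).flatten := ha.unique ga
  -- b
  have hsort1 : List.Pairwise ge' (oi (segWord (j+1) n) fs) := oi_sorted hsort
  have hseg1 : ∀ e ∈ oi (segWord (j+1) n) fs, IsSeg e := by
    intro e he
    rcases mem_oi he with rfl | he'
    · exact ⟨j+1, n, by omega, rfl⟩
    · exact hseg' e he'
  have gb := greatest_oi (oi (segWord (j+1) n) fs) (segWord j (n-1)) hsort1 hseg1 hS2
  rw [← hae] at gb
  have hbe : b = (oi (segWord j (n-1)) (oi (segWord (j+1) n) fs)).flatten := hb.unique gb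
  -- c
  have gc := greatest_oi fs (segWord (j+1) (n-1)) hsort hseg' hS3
  rw [hflat] at gc
  have hce : c = (oi (segWord (j+1) (n-1)) fs).flatten := hc.unique gc
  -- d
  have hsort3 : List.Pairwise ge' (oi (segWord (j+1) (n-1)) fs) := oi_sorted hsort
  have hseg3 : ∀ e ∈ oi (segWord (j+1) (n-1)) fs, IsSeg e := by
    intro e he
    rcases mem_oi he with rfl | he'
    · exact ⟨j+1, n-1, by omega, rfl⟩
    · exact hseg' e he'
  have gd := greatest_oi (oi (segWord (j+1) (n-1)) fs) (segWord j n) hsort3 hseg3 hS4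
  rw [← hce] at gd
  have hde : d = (oi (segWord j n) (oi (segWord (j+1) (n-1)) fs)).flatten := hd.unique gd
  -- conclude via lemB
  rw [hbe, hde, oi_swap (x := segWord j n) (y := segWord (j+1) (n-1)) hsort,
    oi_swap (x := segWord j (n-1)) (y := segWord (j+1) n) hsort]
  exact lemB fs hsort hseg' j (n-1) n (by omega) (by omega)

end CSI

/-- For n ≥ 4, 2 ≤ j ≤ n−2 and every dominant word μ over {1,…,n}:
`(μ ⊙ ⟨j+1,n⟩) ⊙ ⟨j,n−1⟩ > (μ ⊙ ⟨j+1,n−1⟩) ⊙ ⟨j,n⟩`, where `⊙` is the lexicographically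
greatest shuffle. -/
theorem compatibility_strict_inequality (n j : ℕ) (hn : 4 ≤ n)
    (hj1 : 2 ≤ j) (hj2 : j ≤ n - 2)
    (μ : List ℕ) (hμ : IsDominant n μ)
    (a b c d : List ℕ)
    (ha : IsGreatest {w | IsShuffle μ (segWord (j + 1) n) w} a)
    (hb : IsGreatest {w | IsShuffle a (segWord j (n - 1)) w} b)
    (hc : IsGreatest {w | IsShuffle μ (segWord (j + 1) (n - 1)) w} c)
    (hd : IsGreatest {w | IsShuffle c (segWord j n) w} d) :
    d < b := by
  exact CSI.main n j hn hj1 hj2 μ hμ a b c d ha hb hc hd
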